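/- Let N be a positive integer and let L² be the Hilbert space of square-integrable complex functions on [0,1)^N with Lebesgue measure. For complex coefficients (a_α)_{α ⊆ {1,...,N}} and (a'_α)_{α ⊆ {1,...,N}}, let 𝒜 and 𝒜' be the operators (𝒜u)(k) = Σ_α a_α ∫_{[0,1)^{|α|}} u(k with coordinates in α replaced by x_α) dx_α, and similarly for 𝒜' with a'. Then the composition 𝒜𝒜' is of the same form with coefficients (a''_α)_{α ⊆ {1,...,N}}, and the b-transforms b_α = Σ_{β ⊆ α} a_β, b'_α = Σ_{β ⊆ α} a'_β, b''_α = Σ_{β ⊆ α} a''_β satisfy b''_α = b_α · b'_α for every α ⊆ {1,...,N}; i.e., the map 𝒜 ↦ (Σ_{β ⊆ α} a_β)_{α ⊆ {1,...,N}} is multiplicative into ℂ^{2^N} with pointwise multiplication. -/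

import Mathlib

open MeasureTheory

/-- The cube `[0,1)^ι` with Lebesgue measure, modelled as the product of the
Lebesgue measure on `ℝ` restricted to `[0,1)` over each coordinate. -/
noncomputable def cubeMeasure (ι : Type*) [Fintype ι] : Measure (ι → ℝ) :=
  Measure.pi fun _ => (volume : Measure ℝ).restrict (Set.Ico 0 1)

/-- `∫_{[0,1)^{|α|}} u(k with the coordinates in α replaced by x_α) dx_α`:
integration of `u` over the coordinates indexed by `α`, the remaining
coordinates being those of `k`.  For `α = ∅` this is `u k`. -/
noncomputable def partialIntegral {N : ℕ} (α : Finset (Fin N))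
    (u : (Fin N → ℝ) → ℂ) (k : Fin N → ℝ) : ℂ :=
  ∫ x : {j // j ∈ α} → ℝ, u (fun j => if h : j ∈ α then x ⟨j, h⟩ else k j)
    ∂(cubeMeasure {j // j ∈ α})

namespace Stmt16Aux

instance : IsProbabilityMeasure ((volume : Measure ℝ).restrict (Set.Ico 0 1)) :=
  ⟨by simp⟩

instance (ι : Type*) [Fintype ι] : IsProbabilityMeasure (cubeMeasure ι) := by
  unfold cubeMeasure; infer_instance

instance (ι : Type*) [Fintype ι] : SFinite (cubeMeasure ι) := inferInstance

variable {N : ℕ}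

/-- The full-cube version of the partial integral. -/
noncomputable def Q (β : Finset (Fin N)) (u : (Fin N → ℝ) → ℂ) (k : Fin N → ℝ) : ℂ :=
  ∫ x, u (β.piecewise x k) ∂(cubeMeasure (Fin N))

lemma measurable_piecewise_pair (β : Finset (Fin N)) :
    Measurable (fun p : (Fin N → ℝ) × (Fin N → ℝ) => β.piecewise p.2 p.1) := by
  refine measurable_pi_lambda _ fun j => ?_
  by_cases h : j ∈ β
  · simpa [Finset.piecewise, h, Function.comp_def] using (measurable_pi_apply j).comp measurable_snd
  · simpa [Finset.piecewise, h, Function.comp_def] using (measurable_pi_apply j).comp measurable_fst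

lemma measurable_piecewise_left (β : Finset (Fin N)) (k : Fin N → ℝ) :
    Measurable (fun x : Fin N → ℝ => β.piecewise x k) := by
  refine measurable_pi_lambda _ fun j => ?_
  by_cases h : j ∈ β
  · simpa [Finset.piecewise, h] using measurable_pi_apply j
  · simp [Finset.piecewise, h]

/-- The measurable equivalence splitting the cube along `β`. -/
def eβ (β : Finset (Fin N)) : ((Fin N → ℝ) ≃ᵐ (({j // j ∈ β} → ℝ) × ({j : Fin N // ¬ j ∈ β} → ℝ))) :=
  MeasurableEquiv.piEquivPiSubtypeProd (fun _ : Fin N => ℝ) (· ∈ β)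

lemma eβ_MP (β : Finset (Fin N)) :
    MeasurePreserving (eβ β) (cubeMeasure (Fin N))
      ((cubeMeasure {j : Fin N // j ∈ β}).prod (cubeMeasure {j : Fin N // ¬ j ∈ β})) := by
  unfold cubeMeasure eβ
  have : (Subtype.fintype fun x : Fin N => x ∈ β) = Finset.Subtype.fintype β :=
    Subsingleton.elim _ _
  rw [← this]
  exact MeasureTheory.measurePreserving_piEquivPiSubtypeProd
    (fun _ : Fin N => (volume : Measure ℝ).restrict (Set.Ico 0 1)) (· ∈ β)

lemma restrict_MP (β : Finset (Fin N)) :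
    MeasurePreserving (fun x : Fin N → ℝ => fun j : {j // j ∈ β} => x j)
      (cubeMeasure (Fin N)) (cubeMeasure {j : Fin N // j ∈ β}) := by
  have h2 : MeasurePreserving (Prod.fst)
      ((cubeMeasure {j : Fin N // j ∈ β}).prod (cubeMeasure {j : Fin N // ¬ j ∈ β}))
      (cubeMeasure {j : Fin N // j ∈ β}) := ⟨measurable_fst, by simp [Measure.map_fst_prod]⟩
  exact h2.comp (eβ_MP β)

lemma restrictc_MP (β : Finset (Fin N)) :
    MeasurePreserving (fun x : Fin N → ℝ => fun j : {j : Fin N // ¬ j ∈ β} => x j)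
      (cubeMeasure (Fin N)) (cubeMeasure {j : Fin N // ¬ j ∈ β}) := by
  have h2 : MeasurePreserving (Prod.snd)
      ((cubeMeasure {j : Fin N // j ∈ β}).prod (cubeMeasure {j : Fin N // ¬ j ∈ β}))
      (cubeMeasure {j : Fin N // ¬ j ∈ β}) := ⟨measurable_snd, by simp [Measure.map_snd_prod]⟩
  exact h2.comp (eβ_MP β)

lemma select_MP (β : Finset (Fin N)) :
    MeasurePreserving (fun p : (Fin N → ℝ) × (Fin N → ℝ) => β.piecewise p.2 p.1)
      ((cubeMeasure (Fin N)).prod (cubeMeasure (Fin N))) (cubeMeasure (Fin N)) := by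
  have hswap : MeasurePreserving (Prod.swap)
      ((cubeMeasure (Fin N)).prod (cubeMeasure (Fin N)))
      ((cubeMeasure (Fin N)).prod (cubeMeasure (Fin N))) := Measure.measurePreserving_swap
  have hmap := ((restrict_MP β).prod (restrictc_MP β)).comp hswap
  have hsymm := (eβ_MP β).symm (eβ β)
  have := hsymm.comp hmap
  have hfun : (fun p : (Fin N → ℝ) × (Fin N → ℝ) => β.piecewise p.2 p.1)
      = (fun p : (Fin N → ℝ) × (Fin N → ℝ) =>
          (eβ β).symm ((fun j => p.2 j, fun j => p.1 j))) := by
    funext p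
    funext j
    by_cases h : j ∈ β <;>
      simp [Finset.piecewise, h, eβ, MeasurableEquiv.piEquivPiSubtypeProd,
        Equiv.piEquivPiSubtypeProd]
  rw [hfun]
  exact this

lemma measurable_patch (β : Finset (Fin N)) (k : Fin N → ℝ) :
    Measurable (fun y : {j // j ∈ β} → ℝ =>
      (fun j => if h : j ∈ β then y ⟨j, h⟩ else k j : Fin N → ℝ)) := by
  refine measurable_pi_lambda _ fun j => ?_
  by_cases h : j ∈ β
  · simpa [h] using measurable_pi_apply (⟨j, h⟩ : {j // j ∈ β})
  · simp [h]

lemma partialIntegral_eq_Q (β : Finset (Fin N)) {u : (Fin N → ℝ) → ℂ}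
    (hu : StronglyMeasurable u) (k : Fin N → ℝ) :
    partialIntegral β u k = Q β u k := by
  set G : ({j // j ∈ β} → ℝ) → ℂ :=
    fun y => u (fun j => if h : j ∈ β then y ⟨j, h⟩ else k j) with hGdef
  have hG : StronglyMeasurable G := hu.comp_measurable (measurable_patch β k)
  have key : ∀ x : Fin N → ℝ, u (β.piecewise x k) = G (fun j => x j) := by
    intro x
    congr 1
  have h1 : partialIntegral β u k = ∫ y, G y ∂(cubeMeasure {j : Fin N // j ∈ β}) := rfl
  have h2 : ∫ y, G y ∂(cubeMeasure {j : Fin N // j ∈ β})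
      = ∫ x, G (fun j => x j) ∂(cubeMeasure (Fin N)) := by
    rw [← (restrict_MP β).map_eq,
      integral_map (restrict_MP β).measurable.aemeasurable]
    rw [(restrict_MP β).map_eq]
    exact hG.aestronglyMeasurable
  rw [h1, h2]
  unfold Q
  exact (integral_congr_ae (Filter.EventuallyEq.of_eq (funext fun x => (key x).symm)))

lemma partialIntegral_congr_ae (β : Finset (Fin N)) {v w : (Fin N → ℝ) → ℂ}
    (hvw : v =ᵐ[cubeMeasure (Fin N)] w) :
    ∀ᵐ k ∂(cubeMeasure (Fin N)), partialIntegral β v k = partialIntegral β w k := by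
  set μ₁ := cubeMeasure {j : Fin N // j ∈ β}
  set μ₂ := cubeMeasure {j : Fin N // ¬ j ∈ β}
  have hsymm := (eβ_MP β).symm (eβ β)
  have h0 : ∀ᵐ p ∂(μ₁.prod μ₂), v ((eβ β).symm p) = w ((eβ β).symm p) :=
    hsymm.quasiMeasurePreserving.tendsto_ae.eventually hvw
  have hswap : MeasurePreserving (Prod.swap) (μ₂.prod μ₁) (μ₁.prod μ₂) :=
    Measure.measurePreserving_swap
  have h1 : ∀ᵐ q ∂(μ₂.prod μ₁), v ((eβ β).symm q.swap) = w ((eβ β).symm q.swap) :=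
    hswap.quasiMeasurePreserving.tendsto_ae.eventually h0
  have h2 : ∀ᵐ y ∂μ₂, ∀ᵐ x ∂μ₁, v ((eβ β).symm (x, y)) = w ((eβ β).symm (x, y)) := by
    have := Measure.ae_ae_of_ae_prod h1
    filter_upwards [this] with y hy
    filter_upwards [hy] with x hx
    exact hx
  have hsnd : MeasurePreserving (Prod.snd) (μ₁.prod μ₂) μ₂ :=
    ⟨measurable_snd, by simp [Measure.map_snd_prod, μ₁]⟩
  have h3 : ∀ᵐ p ∂(μ₁.prod μ₂), ∀ᵐ x ∂μ₁,
      v ((eβ β).symm (x, p.2)) = w ((eβ β).symm (x, p.2)) :=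
    hsnd.quasiMeasurePreserving.tendsto_ae.eventually h2
  have h4 : ∀ᵐ k ∂(cubeMeasure (Fin N)), ∀ᵐ x ∂μ₁,
      v ((eβ β).symm (x, (eβ β k).2)) = w ((eβ β).symm (x, (eβ β k).2)) :=
    (eβ_MP β).quasiMeasurePreserving.tendsto_ae.eventually h3
  filter_upwards [h4] with k hk
  have patch : ∀ x : {j // j ∈ β} → ℝ,
      (fun j => if h : j ∈ β then x ⟨j, h⟩ else k j : Fin N → ℝ)
        = (eβ β).symm (x, (eβ β k).2) := by
    intro x
    funext j
    by_cases h : j ∈ β <;>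
      simp [h, eβ, MeasurableEquiv.piEquivPiSubtypeProd, Equiv.piEquivPiSubtypeProd]
  unfold partialIntegral
  refine integral_congr_ae ?_
  filter_upwards [hk] with x hx
  rw [patch x]
  exact hx

lemma psi_MP (α β : Finset (Fin N)) :
    MeasurePreserving
      (fun q : (Fin N → ℝ) × ((Fin N → ℝ) × (Fin N → ℝ)) =>
        β.piecewise q.2.2 (α.piecewise q.2.1 q.1))
      ((cubeMeasure (Fin N)).prod ((cubeMeasure (Fin N)).prod (cubeMeasure (Fin N))))
      (cubeMeasure (Fin N)) := by
  set μ := cubeMeasure (Fin N)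
  have hassoc : MeasurePreserving (MeasurableEquiv.prodAssoc.symm)
      (μ.prod (μ.prod μ)) ((μ.prod μ).prod μ) :=
    (measurePreserving_prodAssoc μ μ μ).symm MeasurableEquiv.prodAssoc
  have h1 : MeasurePreserving
      (Prod.map (fun p : (Fin N → ℝ) × (Fin N → ℝ) => α.piecewise p.2 p.1)
        (id : (Fin N → ℝ) → (Fin N → ℝ)))
      ((μ.prod μ).prod μ) (μ.prod μ) :=
    (select_MP α).prod (MeasurePreserving.id μ)
  have h2 := (select_MP β).comp (h1.comp hassoc)
  convert h2 using 1
  funext q; rfl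

lemma Q_stronglyMeasurable (β : Finset (Fin N)) {u : (Fin N → ℝ) → ℂ}
    (hu : StronglyMeasurable u) : StronglyMeasurable (Q β u) := by
  have h : StronglyMeasurable
      (fun q : (Fin N → ℝ) × (Fin N → ℝ) => u (β.piecewise q.2 q.1)) :=
    hu.comp_measurable (measurable_piecewise_pair β)
  exact h.integral_prod_right'

lemma Q_comp (α β : Finset (Fin N)) {u : (Fin N → ℝ) → ℂ}
    (hu : StronglyMeasurable u) (hu1 : Integrable u (cubeMeasure (Fin N))) :
    ∀ᵐ k ∂(cubeMeasure (Fin N)),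
      Integrable (fun p : (Fin N → ℝ) × (Fin N → ℝ) =>
          u (β.piecewise p.2 (α.piecewise p.1 k)))
        ((cubeMeasure (Fin N)).prod (cubeMeasure (Fin N))) ∧
      Q α (Q β u) k = Q (α ∪ β) u k := by
  set μ := cubeMeasure (Fin N) with hμ
  have hΨ := psi_MP α β
  have hint3 : Integrable
      (u ∘ fun q : (Fin N → ℝ) × ((Fin N → ℝ) × (Fin N → ℝ)) =>
        β.piecewise q.2.2 (α.piecewise q.2.1 q.1)) (μ.prod (μ.prod μ)) :=
    (hΨ.integrable_comp hu.aestronglyMeasurable).2 hu1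
  have hsec := hint3.prod_right_ae
  filter_upwards [hsec] with k hk
  refine ⟨hk, ?_⟩
  have piece : ∀ p : (Fin N → ℝ) × (Fin N → ℝ),
      β.piecewise p.2 (α.piecewise p.1 k)
        = (α ∪ β).piecewise (β.piecewise p.2 p.1) k := by
    intro p
    funext j
    by_cases hb : j ∈ β <;> by_cases ha : j ∈ α <;>
      simp [Finset.piecewise, hb, ha]
  have step1 : Q α (Q β u) k
      = ∫ x, ∫ y, u (β.piecewise y (α.piecewise x k)) ∂μ ∂μ := rfl
  have step2 : ∫ x, ∫ y, u (β.piecewise y (α.piecewise x k)) ∂μ ∂μ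
      = ∫ p, u (β.piecewise p.2 (α.piecewise p.1 k)) ∂(μ.prod μ) :=
    integral_integral hk
  have hw : StronglyMeasurable (fun z : Fin N → ℝ => u ((α ∪ β).piecewise z k)) :=
    hu.comp_measurable (measurable_piecewise_left (α ∪ β) k)
  have step3 : ∫ z, u ((α ∪ β).piecewise z k) ∂μ
      = ∫ p, u (β.piecewise p.2 (α.piecewise p.1 k)) ∂(μ.prod μ) := by
    have hmap : ∫ z, u ((α ∪ β).piecewise z k)
          ∂(Measure.map (fun p : (Fin N → ℝ) × (Fin N → ℝ) => β.piecewise p.2 p.1)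
            (μ.prod μ))
        = ∫ p : (Fin N → ℝ) × (Fin N → ℝ),
            u ((α ∪ β).piecewise (β.piecewise p.2 p.1) k) ∂(μ.prod μ) := by
      refine integral_map (measurable_piecewise_pair β).aemeasurable ?_
      rw [(select_MP β).map_eq]
      exact hw.aestronglyMeasurable
    rw [(select_MP β).map_eq] at hmap
    rw [hmap]
    exact integral_congr_ae
      (Filter.EventuallyEq.of_eq (funext fun p => by rw [piece p]))
  rw [step1, step2, step3.symm]
  rfl

lemma Q_sum (α : Finset (Fin N)) (c : Finset (Fin N) → ℂ) {u : (Fin N → ℝ) → ℂ}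
    {k : Fin N → ℝ}
    (hk : ∀ β : Finset (Fin N),
      Integrable (fun p : (Fin N → ℝ) × (Fin N → ℝ) =>
          u (β.piecewise p.2 (α.piecewise p.1 k)))
        ((cubeMeasure (Fin N)).prod (cubeMeasure (Fin N)))) :
    Q α (fun k' => ∑ β : Finset (Fin N), c β * Q β u k') k
      = ∑ β : Finset (Fin N), c β * Q α (Q β u) k := by
  have hint : ∀ β : Finset (Fin N),
      Integrable (fun x => Q β u (α.piecewise x k)) (cubeMeasure (Fin N)) :=
    fun β => (hk β).integral_prod_left
  have h1 : Q α (fun k' => ∑ β : Finset (Fin N), c β * Q β u k') k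
      = ∫ x, ∑ β : Finset (Fin N), c β * Q β u (α.piecewise x k)
          ∂(cubeMeasure (Fin N)) := rfl
  rw [h1, integral_finset_sum _ (fun β _ => (hint β).const_mul (c β))]
  exact Finset.sum_congr rfl fun β _ => integral_const_mul _ _

lemma fiber_sum (a a' : Finset (Fin N) → ℂ) (g : Finset (Fin N) → ℂ) :
    (∑ α : Finset (Fin N), a α * ∑ β : Finset (Fin N), a' β * g (α ∪ β))
      = ∑ γ : Finset (Fin N),
          (∑ p ∈ (Finset.univ ×ˢ Finset.univ).filter
            (fun p : Finset (Fin N) × Finset (Fin N) => p.1 ∪ p.2 = γ),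
            a p.1 * a' p.2) * g γ := by
  classical
  have h1 : (∑ α : Finset (Fin N), a α * ∑ β : Finset (Fin N), a' β * g (α ∪ β))
      = ∑ p ∈ (Finset.univ ×ˢ Finset.univ : Finset (Finset (Fin N) × Finset (Fin N))),
          a p.1 * a' p.2 * g (p.1 ∪ p.2) := by
    rw [Finset.sum_product]
    exact Finset.sum_congr rfl fun α _ => by
      rw [Finset.mul_sum]; exact Finset.sum_congr rfl fun β _ => by ring
  rw [h1, ← Finset.sum_fiberwise_of_maps_to
    (g := fun p : Finset (Fin N) × Finset (Fin N) => p.1 ∪ p.2)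
    (fun p _ => Finset.mem_univ _)]
  refine Finset.sum_congr rfl fun γ _ => ?_
  rw [Finset.sum_mul]
  exact Finset.sum_congr rfl fun p hp => by
    rw [(Finset.mem_filter.1 hp).2]

lemma comb (δ : Finset (Fin N)) (a a' : Finset (Fin N) → ℂ) :
    (∑ γ ∈ δ.powerset, ∑ p ∈ (Finset.univ ×ˢ Finset.univ).filter
        (fun p : Finset (Fin N) × Finset (Fin N) => p.1 ∪ p.2 = γ), a p.1 * a' p.2)
      = (∑ β ∈ δ.powerset, a β) * (∑ β ∈ δ.powerset, a' β) := by
  classical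
  rw [Finset.sum_fiberwise_eq_sum_filter]
  rw [Finset.sum_mul_sum]
  have hset : (Finset.univ ×ˢ Finset.univ : Finset (Finset (Fin N) × Finset (Fin N))).filter
      (fun p => p.1 ∪ p.2 ∈ δ.powerset) = δ.powerset ×ˢ δ.powerset := by
    ext p
    simp [Finset.mem_filter, Finset.mem_product, Finset.mem_powerset,
      Finset.union_subset_iff]
  rw [hset, Finset.sum_product]

end Stmt16Aux

open Stmt16Aux

/-- the composition of two operators of the form
`u ↦ Σ_α a_α ∫_{[0,1)^{|α|}} u dx_α` is of the same form, with coefficients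
`a''` whose b-transform is the pointwise product of the b-transforms of `a`
and `a'`: `Σ_{β ⊆ α} a''_β = (Σ_{β ⊆ α} a_β)·(Σ_{β ⊆ α} a'_β)` for all `α`. -/
theorem stmt_16 (N : ℕ) (hN : 0 < N) (a a' : Finset (Fin N) → ℂ)
    (𝒜 𝒜' : Lp ℂ 2 (cubeMeasure (Fin N)) →L[ℂ] Lp ℂ 2 (cubeMeasure (Fin N)))
    (h𝒜 : ∀ u : Lp ℂ 2 (cubeMeasure (Fin N)),
      ⇑(𝒜 u) =ᵐ[cubeMeasure (Fin N)] fun k =>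
        ∑ α : Finset (Fin N), a α * partialIntegral α (⇑u) k)
    (h𝒜' : ∀ u : Lp ℂ 2 (cubeMeasure (Fin N)),
      ⇑(𝒜' u) =ᵐ[cubeMeasure (Fin N)] fun k =>
        ∑ α : Finset (Fin N), a' α * partialIntegral α (⇑u) k) :
    ∃ a'' : Finset (Fin N) → ℂ,
      (∀ u : Lp ℂ 2 (cubeMeasure (Fin N)),
        ⇑((𝒜 * 𝒜') u) =ᵐ[cubeMeasure (Fin N)] fun k =>
          ∑ α : Finset (Fin N), a'' α * partialIntegral α (⇑u) k) ∧
      (∀ α : Finset (Fin N),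
        ∑ β ∈ α.powerset, a'' β =
          (∑ β ∈ α.powerset, a β) * (∑ β ∈ α.powerset, a' β)) := by
  classical
  refine ⟨fun γ => ∑ p ∈ (Finset.univ ×ˢ Finset.univ).filter
      (fun p : Finset (Fin N) × Finset (Fin N) => p.1 ∪ p.2 = γ), a p.1 * a' p.2,
    ?_, fun δ => comb δ a a'⟩
  intro u
  set uT : (Fin N → ℝ) → ℂ := (Lp.aestronglyMeasurable u).mk ⇑u with huT
  have hsm : StronglyMeasurable uT := (Lp.aestronglyMeasurable u).stronglyMeasurable_mk
  have huu : ⇑u =ᵐ[cubeMeasure (Fin N)] uT := (Lp.aestronglyMeasurable u).ae_eq_mk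
  have hint : Integrable uT (cubeMeasure (Fin N)) :=
    ((Lp.memLp u).integrable (by norm_num)).congr huu
  set V : (Fin N → ℝ) → ℂ := fun k => ∑ β : Finset (Fin N), a' β * Q β uT k with hV
  have hVsm : StronglyMeasurable V :=
    Finset.stronglyMeasurable_fun_sum _ fun β _ =>
      (Q_stronglyMeasurable β hsm).const_mul (a' β)
  -- partial integrals of ⇑u agree a.e. with Q of uT
  have hu_Q : ∀ β : Finset (Fin N), ∀ᵐ k ∂(cubeMeasure (Fin N)),
      partialIntegral β (⇑u) k = Q β uT k := by
    intro β
    filter_upwards [partialIntegral_congr_ae β huu] with k hk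
    rw [hk, partialIntegral_eq_Q β hsm]
  -- 𝒜' u is a.e. equal to V
  have hA'V : ⇑(𝒜' u) =ᵐ[cubeMeasure (Fin N)] V := by
    refine (h𝒜' u).trans ?_
    filter_upwards [ae_all_iff.2 hu_Q] with k hk
    exact Finset.sum_congr rfl fun β _ => by rw [hk β]
  have hPIV : ∀ α : Finset (Fin N), ∀ᵐ k ∂(cubeMeasure (Fin N)),
      partialIntegral α (⇑(𝒜' u)) k = Q α V k := by
    intro α
    filter_upwards [partialIntegral_congr_ae α hA'V] with k hk
    rw [hk, partialIntegral_eq_Q α hVsm]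
  have hcomp : ∀ α β : Finset (Fin N), ∀ᵐ k ∂(cubeMeasure (Fin N)),
      Integrable (fun p : (Fin N → ℝ) × (Fin N → ℝ) =>
          uT (β.piecewise p.2 (α.piecewise p.1 k))) ((cubeMeasure (Fin N)).prod (cubeMeasure (Fin N))) ∧
      Q α (Q β uT) k = Q (α ∪ β) uT k := fun α β => Q_comp α β hsm hint
  have hmul : ⇑((𝒜 * 𝒜') u) = ⇑(𝒜 (𝒜' u)) := by
    rw [ContinuousLinearMap.mul_apply]
  filter_upwards [h𝒜 (𝒜' u), ae_all_iff.2 hPIV,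
    ae_all_iff.2 fun α => ae_all_iff.2 fun β => hcomp α β,
    ae_all_iff.2 hu_Q] with k hk2 hk3 hk4 hk5
  have step : ⇑((𝒜 * 𝒜') u) k
      = ∑ γ : Finset (Fin N),
          (∑ p ∈ (Finset.univ ×ˢ Finset.univ).filter
            (fun p : Finset (Fin N) × Finset (Fin N) => p.1 ∪ p.2 = γ),
            a p.1 * a' p.2) * Q γ uT k := by
    rw [hmul]
    rw [hk2]
    have e1 : ∀ α : Finset (Fin N),
        partialIntegral α (⇑(𝒜' u)) k = ∑ β : Finset (Fin N), a' β * Q (α ∪ β) uT k := by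
      intro α
      rw [hk3 α, hV]
      rw [Q_sum α a' (fun β => (hk4 α β).1)]
      exact Finset.sum_congr rfl fun β _ => by rw [(hk4 α β).2]
    calc (∑ α : Finset (Fin N), a α * partialIntegral α (⇑(𝒜' u)) k)
        = ∑ α : Finset (Fin N), a α * ∑ β : Finset (Fin N), a' β * Q (α ∪ β) uT k :=
          Finset.sum_congr rfl fun α _ => by rw [e1 α]
      _ = _ := fiber_sum a a' (fun γ => Q γ uT k)
  rw [step]
  exact (Finset.sum_congr rfl fun γ _ => by rw [hk5 γ]).symm
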